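/- Let f : ℤ^m →ₗ[ℤ] ℤ^n be a ℤ-linear map and let p be a prime number. Then the rank of f over the field ZMod p equals the rank of f over ℚ if and only if the cokernel ℤ^n ⧸ range f has no p-torsion, i.e., for every element x of ℤ^n ⧸ range f, p • x = 0 implies x = 0. -/

import Mathlib

/-- The rank of a `ℤ`-linear map `f : ℤ^m → ℤ^n` over a field `K` (regarded as a
`ℤ`-algebra): the rank over `K` of the matrix of `f` with entries mapped through
`ℤ → K`, i.e. the `K`-dimension of the range of the induced `K`-linear map. -/
noncomputable def rankOver {m n : ℕ} (f : (Fin m → ℤ) →ₗ[ℤ] (Fin n → ℤ))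
    (K : Type*) [Field K] : ℕ :=
  ((LinearMap.toMatrix (Pi.basisFun ℤ (Fin m)) (Pi.basisFun ℤ (Fin n)) f).map
    (Int.cast : ℤ → K)).rank


section RankOverAux

open Submodule Set Matrix

variable {K : Type*} [Field K]

/-- Coordinatewise cast `ℤ^n → K^n` as a `ℤ`-linear map. -/
def intCastLM (n : ℕ) (K : Type*) [Field K] : (Fin n → ℤ) →ₗ[ℤ] (Fin n → K) where
  toFun x j := (x j : K)
  map_add' x y := by ext j; simp
  map_smul' c x := by
    ext j
    simp only [Pi.smul_apply, smul_eq_mul, RingHom.id_apply, Int.cast_mul,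
      ← Int.cast_smul_eq_zsmul K]

lemma span_image_span {M V : Type*} [AddCommGroup M] [AddCommGroup V] [Module K V]
    (ι : M →ₗ[ℤ] V) (s : Set M) :
    span K (ι '' (span ℤ s : Submodule ℤ M)) = span K (ι '' s) := by
  apply le_antisymm
  · rw [span_le]
    rintro _ ⟨x, hx, rfl⟩
    have h : span ℤ s ≤ ((span K (ι '' s)).restrictScalars ℤ).comap ι := by
      rw [span_le]
      intro y hy
      exact subset_span (mem_image_of_mem _ hy)
    exact h hx
  · exact span_mono (image_mono subset_span)


lemma rankOver_eq_card {m n k : ℕ} (f : (Fin m → ℤ) →ₗ[ℤ] (Fin n → ℤ))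
    (K : Type*) [Field K]
    (snf : Module.Basis.SmithNormalForm (LinearMap.range f) (Fin n) k) :
    rankOver f K = Nat.card {i : Fin k // (snf.a i : K) ≠ 0} := by
  classical
  set A := LinearMap.toMatrix (Pi.basisFun ℤ (Fin m)) (Pi.basisFun ℤ (Fin n)) f with hA
  have hAf : A.mulVecLin = f := by
    have h := Matrix.toLin_toMatrix (Pi.basisFun ℤ (Fin m)) (Pi.basisFun ℤ (Fin n)) f
    rw [Matrix.toLin_eq_toLin'] at h
    rw [← h]
    ext x
    simp [Matrix.toLin'_apply, Matrix.mulVecLin_apply, hA]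
  have hNspan : span ℤ (Set.range A.col) = LinearMap.range f := by
    rw [← Matrix.range_mulVecLin, hAf]
  -- step 1
  have hcol : Set.range (A.map (Int.cast : ℤ → K)).col
      = intCastLM n K '' Set.range A.col := by
    rw [← Set.range_comp]
    rfl
  have h1 : rankOver f K
      = Module.finrank K (span K (intCastLM n K '' ((LinearMap.range f : Submodule ℤ (Fin n → ℤ)) : Set (Fin n → ℤ)))) := by
    rw [rankOver, ← hA, Matrix.rank, Matrix.range_mulVecLin, hcol, ← hNspan,
      span_image_span]
  -- step 2 : N generated by the SNF family
  have hN2 : span ℤ (Set.range fun i => snf.a i • snf.bM (snf.f i)) = LinearMap.range f := by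
    have h := congrArg (Submodule.map (LinearMap.range f).subtype) snf.bN.span_eq
    rw [Submodule.map_span, Submodule.map_top, Submodule.range_subtype] at h
    have hfun : (fun i => snf.a i • snf.bM (snf.f i))
        = ((LinearMap.range f).subtype ∘ snf.bN) := funext fun i => (snf.snf i).symm
    rw [hfun, Set.range_comp]
    exact h
  -- step 3: image of bM under coordinatewise cast is a K-basis
  let B := (Pi.basisFun ℤ (Fin n)).toMatrix snf.bM
  haveI hBinv : Invertible B := (Pi.basisFun ℤ (Fin n)).invertibleToMatrix snf.bM
  haveI hBKinv : Invertible (B.map (Int.cast : ℤ → K)) :=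
    Invertible.map (Int.castRingHom K).mapMatrix B
  let bK : Module.Basis (Fin n) K (Fin n → K) :=
    (Pi.basisFun K (Fin n)).map
      ((B.map (Int.cast : ℤ → K)).toLinearEquiv' hBKinv)
  have hbK : ∀ j, bK j = intCastLM n K (snf.bM j) := by
    intro j
    show ((B.map (Int.cast : ℤ → K)).toLinearEquiv' hBKinv)
      ((Pi.basisFun K (Fin n)) j) = _
    funext i
    simp [Matrix.toLinearEquiv', Matrix.toLin'_apply, Matrix.mulVec_single,
      B, Module.Basis.toMatrix_apply, intCastLM, Pi.basisFun_repr]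
  -- step 4: rewrite the span
  have himg : intCastLM n K '' Set.range (fun i => snf.a i • snf.bM (snf.f i))
      = Set.range (fun i => (snf.a i : K) • bK (snf.f i)) := by
    have hfun2 : ⇑(intCastLM n K) ∘ (fun i => snf.a i • snf.bM (snf.f i))
        = fun i => (snf.a i : K) • bK (snf.f i) := by
      funext i
      show intCastLM n K (snf.a i • snf.bM (snf.f i)) = _
      rw [_root_.map_smul, ← hbK, Int.cast_smul_eq_zsmul]
    rw [← Set.range_comp, hfun2]
  rw [h1]
  conv_lhs => rw [← hN2]
  rw [span_image_span, himg]
  set G : Fin k → (Fin n → K) := fun i => (snf.a i : K) • bK (snf.f i) with hG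
  have hsub : span K (Set.range G)
      = span K (Set.range (G ∘ (Subtype.val : {i // (snf.a i : K) ≠ 0} → Fin k))) := by
    apply le_antisymm
    · rw [span_le]
      rintro _ ⟨i, rfl⟩
      by_cases h : (snf.a i : K) = 0
      · have : G i = 0 := by rw [hG]; simp [h]
        rw [this]
        exact zero_mem _
      · exact subset_span ⟨⟨i, h⟩, rfl⟩
    · exact span_mono (Set.range_comp_subset_range _ _)
  have h0 : LinearIndependent K
      fun i : {i : Fin k // (snf.a i : K) ≠ 0} => bK (snf.f i.1) :=
    bK.linearIndependent.comp _ (snf.f.injective.comp Subtype.val_injective)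
  have hli := h0.units_smul fun i => Units.mk0 _ i.2
  have hGv : G ∘ (Subtype.val : {i // (snf.a i : K) ≠ 0} → Fin k)
      = ((fun i : {i : Fin k // (snf.a i : K) ≠ 0} => Units.mk0 _ i.2) •
        fun i : {i : Fin k // (snf.a i : K) ≠ 0} => bK (snf.f i.1)) := by
    funext i
    simp [hG, Units.smul_def]
  rw [hsub, hGv, finrank_span_eq_card hli, Nat.card_eq_fintype_card]

lemma mem_range_iff_snf {m n k : ℕ} (f : (Fin m → ℤ) →ₗ[ℤ] (Fin n → ℤ))
    (snf : Module.Basis.SmithNormalForm (LinearMap.range f) (Fin n) k) (y : Fin n → ℤ) :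
    y ∈ LinearMap.range f ↔
      (∀ j, j ∉ Set.range snf.f → snf.bM.repr y j = 0) ∧
        (∀ i, snf.a i ∣ snf.bM.repr y (snf.f i)) := by
  classical
  constructor
  · intro hy
    refine ⟨fun j hj => snf.repr_eq_zero_of_notMem_range ⟨y, hy⟩ hj, fun i => ?_⟩
    refine ⟨snf.bN.repr ⟨y, hy⟩ i, ?_⟩
    rw [snf.repr_apply_embedding_eq_repr_smul ⟨y, hy⟩, _root_.map_smul]
    simp
  · rintro ⟨h1, h2⟩
    choose c hc using h2
    set z : LinearMap.range f := ∑ i, c i • snf.bN i with hz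
    have hrz : snf.bM.repr (z : Fin n → ℤ) = snf.bM.repr y := by
      ext j
      by_cases hj : j ∈ Set.range snf.f
      · obtain ⟨i, rfl⟩ := hj
        rw [snf.repr_apply_embedding_eq_repr_smul z, _root_.map_smul, hc i]
        have hcz : snf.bN.repr z = Finsupp.equivFunOnFinite.symm c := by
          rw [hz]
          refine Finsupp.ext fun i' => ?_
          rw [Module.Basis.repr_sum_self]
          rfl
        rw [hcz]
        simp [mul_comm]
      · rw [snf.repr_eq_zero_of_notMem_range z hj, h1 j hj]
    have : (z : Fin n → ℤ) = y := snf.bM.repr.injective hrz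
    rw [← this]
    exact z.2

lemma torsion_iff_snf {m n k : ℕ} (f : (Fin m → ℤ) →ₗ[ℤ] (Fin n → ℤ)) (p : ℕ)
    [hp : Fact p.Prime]
    (snf : Module.Basis.SmithNormalForm (LinearMap.range f) (Fin n) k) :
    (∀ x : (Fin n → ℤ) ⧸ LinearMap.range f, p • x = 0 → x = 0) ↔
      ∀ i, ¬ ((p : ℤ) ∣ snf.a i) := by
  classical
  have ha0 : ∀ i, snf.a i ≠ 0 := by
    intro i h
    have h0 : ((snf.bN i : LinearMap.range f) : Fin n → ℤ) = 0 := by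
      rw [snf.snf i, h, zero_smul]
    exact snf.bN.ne_zero i (Subtype.coe_injective h0)
  constructor
  · intro H i hdvd
    obtain ⟨b, hb⟩ := hdvd
    have hbne : b ≠ 0 := fun h => ha0 i (by rw [hb, h, mul_zero])
    set y := b • snf.bM (snf.f i) with hy
    have hq : p • (Submodule.Quotient.mk y : _ ⧸ LinearMap.range f) = 0 := by
      rw [← Nat.cast_smul_eq_nsmul ℤ, ← Submodule.Quotient.mk_smul,
        Submodule.Quotient.mk_eq_zero]
      have hsm : (p : ℤ) • y = snf.a i • snf.bM (snf.f i) := by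
        rw [hy, smul_smul, ← hb]
      rw [hsm, ← snf.snf i]
      exact (snf.bN i).2
    have hmem := H _ hq
    rw [Submodule.Quotient.mk_eq_zero] at hmem
    have hd := ((mem_range_iff_snf f snf y).1 hmem).2 i
    have hrepr : snf.bM.repr y (snf.f i) = b := by
      rw [hy, _root_.map_smul]
      simp
    rw [hrepr, hb] at hd
    obtain ⟨c, hc⟩ := hd
    have h1 : (p : ℤ) * c = 1 := by
      have hbc : b * ((p : ℤ) * c) = b * 1 := by
        rw [mul_one]
        linear_combination -hc
      exact mul_left_cancel₀ hbne hbc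
    have hple : (p : ℤ) ∣ 1 := ⟨c, h1.symm⟩
    have := Int.le_of_dvd one_pos hple
    have h2 : 2 ≤ (p : ℤ) := by exact_mod_cast hp.out.two_le
    omega
  · intro H x hx
    obtain ⟨y, rfl⟩ := Submodule.Quotient.mk_surjective _ x
    rw [← Nat.cast_smul_eq_nsmul ℤ, ← Submodule.Quotient.mk_smul,
      Submodule.Quotient.mk_eq_zero] at hx
    rw [Submodule.Quotient.mk_eq_zero]
    have h := (mem_range_iff_snf f snf _).1 hx
    refine (mem_range_iff_snf f snf y).2 ⟨fun j hj => ?_, fun i => ?_⟩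
    · have h0 := h.1 j hj
      rw [_root_.map_smul] at h0
      have hpne : (p : ℤ) ≠ 0 := by exact_mod_cast hp.out.ne_zero
      simpa [hpne, hp.out.ne_zero] using h0
    · have hd := h.2 i
      rw [_root_.map_smul] at hd
      have hcop : IsCoprime (snf.a i) ((p : ℤ)) :=
        ((Prime.coprime_iff_not_dvd (Nat.prime_iff_prime_int.1 hp.out)).2 (H i)).symm
      exact hcop.dvd_of_dvd_mul_left (by simpa using hd)


end RankOverAux

section Main

open Submodule Set Matrix

/-- For a `ℤ`-linear map `f : ℤ^m → ℤ^n` and a prime `p`, the rank of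
`f` over `ZMod p` equals the rank of `f` over `ℚ` if and only if the cokernel
`ℤ^n ⧸ range f` has no `p`-torsion. -/
theorem rankOver_zmod_eq_rankOver_rat_iff_no_p_torsion
    {m n : ℕ} (f : (Fin m → ℤ) →ₗ[ℤ] (Fin n → ℤ)) (p : ℕ) [Fact p.Prime] :
    rankOver f (ZMod p) = rankOver f ℚ ↔
      ∀ x : (Fin n → ℤ) ⧸ LinearMap.range f, p • x = 0 → x = 0 := by
  classical
  obtain ⟨k, snf⟩ := (LinearMap.range f).smithNormalForm (Pi.basisFun ℤ (Fin n))
  rw [rankOver_eq_card f (ZMod p) snf, rankOver_eq_card f ℚ snf,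
    torsion_iff_snf f p snf]
  have ha0 : ∀ i, snf.a i ≠ 0 := by
    intro i h
    have h0 : ((snf.bN i : LinearMap.range f) : Fin n → ℤ) = 0 := by
      rw [snf.snf i, h, zero_smul]
    exact snf.bN.ne_zero i (Subtype.coe_injective h0)
  have hQ : Nat.card {i : Fin k // (snf.a i : ℚ) ≠ 0} = k := by
    rw [Nat.card_congr (Equiv.subtypeUnivEquiv fun i => by
      simpa using ha0 i), Nat.card_eq_fintype_card, Fintype.card_fin]
  rw [hQ]
  have hpred : ∀ i : Fin k, ((snf.a i : ZMod p) ≠ 0) ↔ ¬ ((p : ℤ) ∣ snf.a i) :=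
    fun i => not_congr (ZMod.intCast_zmod_eq_zero_iff_dvd _ p)
  rw [Nat.card_congr (Equiv.subtypeEquivRight hpred), Nat.card_eq_fintype_card,
    Fintype.card_subtype]
  constructor
  · intro h i
    have huniv : Finset.filter (fun i => ¬ ((p : ℤ) ∣ snf.a i)) Finset.univ
        = (Finset.univ : Finset (Fin k)) := by
      apply Finset.eq_univ_of_card
      rw [h, Fintype.card_fin]
    have hi : i ∈ Finset.filter (fun i => ¬ ((p : ℤ) ∣ snf.a i)) Finset.univ := by
      rw [huniv]; exact Finset.mem_univ i
    exact (Finset.mem_filter.1 hi).2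
  · intro h
    rw [Finset.filter_true_of_mem fun i _ => h i, Finset.card_univ, Fintype.card_fin]

end Main
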